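/- Let c and c* be natural numbers with c ≤ c*, let L : Fin c → Fin c* → ℝ be a cost function, and let L' : Fin c* → Fin c* → ℝ be its zero-padding (equal to L on the first c rows and 0 on the remaining rows). Suppose X' : Fin c* → Fin c* → ℕ satisfies X' i j ∈ {0,1}, ∑ j, X' i j = 1 for every row i, ∑ i, X' i j = 1 for every column j, and X' minimizes ∑ i, ∑ j, L' i j * (X' i j : ℝ) over all such 0–1 matrices with all row and column sums equal to 1. Define X : Fin c → Fin c* → ℕ by X i j = X' (Fin.castLE h i) j. Then X takes values in {0,1}, every row of X sums to 1, every column of X sums to at most 1, and X minimizes ∑ i : Fin c, ∑ j : Fin c*, L i j * (Y i j : ℝ) over all Y : Fin c → Fin c* → ℕ taking values in {0,1} with every row sum equal to 1 and every column sum at most 1. -/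
import Mathlib

open Finset

-- sum over Fin cs of a function vanishing on rows ≥ c equals sum over first c rows
lemma sum_restrict {c cs : ℕ} (h : c ≤ cs) (g : Fin cs → ℝ)
    (hg : ∀ i : Fin cs, c ≤ (i : ℕ) → g i = 0) :
    ∑ i : Fin cs, g i = ∑ i : Fin c, g (Fin.castLE h i) := by
  have : ∑ i : Fin c, g (Fin.castLE h i) = ∑ i ∈ Finset.univ.map (Fin.castLEEmb h), g i := by
    rw [Finset.sum_map]; rfl
  rw [this]
  refine (Finset.sum_subset (Finset.subset_univ _) ?_).symm
  intro i _ hi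
  refine hg i ?_
  by_contra hci
  push_neg at hci
  exact hi (Finset.mem_map.2 ⟨⟨i, hci⟩, Finset.mem_univ _, rfl⟩)

-- a 0/1 row summing to 1 is an indicator
lemma row_indicator {n : ℕ} (v : Fin n → ℕ) (h01 : ∀ j, v j = 0 ∨ v j = 1)
    (hs : ∑ j, v j = 1) : ∃ j0, ∀ j, v j = if j = j0 then 1 else 0 := by
  have hex : ∃ j0, v j0 = 1 := by
    by_contra hc
    push_neg at hc
    have : ∀ j, v j = 0 := fun j => (h01 j).resolve_right (hc j)
    simp [this] at hs
  obtain ⟨j0, hj0⟩ := hex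
  refine ⟨j0, fun j => ?_⟩
  by_cases hj : j = j0
  · simp [hj, hj0]
  · simp only [if_neg hj]
    have := Finset.add_sum_erase Finset.univ v (Finset.mem_univ j0)
    rw [hs, hj0] at this
    have hz : ∑ x ∈ Finset.univ.erase j0, v x = 0 := by omega
    have := Finset.sum_eq_zero_iff.1 hz j (Finset.mem_erase.2 ⟨hj, Finset.mem_univ j⟩)
    exact this

lemma exists_perm_extend {c cs : ℕ} (h : c ≤ cs) (f : Fin c → Fin cs)
    (hf : Function.Injective f) :
    ∃ σ : Equiv.Perm (Fin cs), ∀ i : Fin c, σ (Fin.castLE h i) = f i := by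
  classical
  set e1 : Fin c → Fin cs := Fin.castLE h with he1def
  have he1 : Function.Injective e1 := Fin.castLE_injective h
  have hcard : Fintype.card ↥(Set.range e1)ᶜ = Fintype.card ↥(Set.range f)ᶜ := by
    rw [Fintype.card_compl_set, Fintype.card_compl_set,
      Set.card_range_of_injective he1, Set.card_range_of_injective hf]
  let ec : ↥(Set.range e1)ᶜ ≃ ↥(Set.range f)ᶜ := Fintype.equivOfCardEq hcard
  refine ⟨((Equiv.Set.sumCompl (Set.range e1)).symm.trans
      (Equiv.sumCongr ((Equiv.ofInjective e1 he1).symm.trans (Equiv.ofInjective f hf)) ec)).trans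
      (Equiv.Set.sumCompl (Set.range f)), fun i => ?_⟩
  simp only [Equiv.trans_apply]
  rw [Equiv.Set.sumCompl_symm_apply_of_mem (Set.mem_range_self i)]
  simp [Equiv.ofInjective_symm_apply]

/-- Theorem 1 of the paper, matrix form: if `X'` is an optimal solution of the
padded square assignment problem, then its first `c` rows form an optimal solution of the
original integer linear program. -/
theorem optimal_padded_matrix_restricts_to_optimal (c cs : ℕ) (h : c ≤ cs)
    (L : Fin c → Fin cs → ℝ) (L' : Fin cs → Fin cs → ℝ)
    (hpad : ∀ (i : Fin c) (j : Fin cs), L' (Fin.castLE h i) j = L i j)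
    (hzero : ∀ (i j : Fin cs), c ≤ (i : ℕ) → L' i j = 0)
    (X' : Fin cs → Fin cs → ℕ)
    (h01 : ∀ i j : Fin cs, X' i j = 0 ∨ X' i j = 1)
    (hrow : ∀ i : Fin cs, ∑ j, X' i j = 1)
    (hcol : ∀ j : Fin cs, ∑ i, X' i j = 1)
    (hopt : ∀ Y' : Fin cs → Fin cs → ℕ,
      (∀ i j : Fin cs, Y' i j = 0 ∨ Y' i j = 1) →
      (∀ i : Fin cs, ∑ j, Y' i j = 1) →
      (∀ j : Fin cs, ∑ i, Y' i j = 1) →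
      ∑ i, ∑ j, L' i j * (X' i j : ℝ) ≤ ∑ i, ∑ j, L' i j * (Y' i j : ℝ)) :
    (∀ (i : Fin c) (j : Fin cs),
        X' (Fin.castLE h i) j = 0 ∨ X' (Fin.castLE h i) j = 1) ∧
    (∀ i : Fin c, ∑ j, X' (Fin.castLE h i) j = 1) ∧
    (∀ j : Fin cs, ∑ i : Fin c, X' (Fin.castLE h i) j ≤ 1) ∧
    (∀ Y : Fin c → Fin cs → ℕ,
      (∀ (i : Fin c) (j : Fin cs), Y i j = 0 ∨ Y i j = 1) →
      (∀ i : Fin c, ∑ j, Y i j = 1) →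
      (∀ j : Fin cs, ∑ i : Fin c, Y i j ≤ 1) →
      ∑ i : Fin c, ∑ j : Fin cs, L i j * (X' (Fin.castLE h i) j : ℝ) ≤
        ∑ i : Fin c, ∑ j : Fin cs, L i j * (Y i j : ℝ)) := by
  classical
  refine ⟨fun i j => h01 _ j, fun i => hrow _, ?_, ?_⟩
  · -- column sums at most 1
    intro j
    have key : ∑ i : Fin c, X' (Fin.castLE h i) j
        = ∑ i ∈ Finset.univ.map (Fin.castLEEmb h), X' i j := by
      rw [Finset.sum_map]; rfl
    rw [key, ← hcol j]
    exact Finset.sum_le_sum_of_subset (Finset.subset_univ _)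
  · -- optimality
    intro Y hY01 hYrow hYcol
    -- selected column function
    have hf : ∀ i : Fin c, ∃ j0, ∀ j, Y i j = if j = j0 then 1 else 0 :=
      fun i => row_indicator (Y i) (hY01 i) (hYrow i)
    choose f hfY using hf
    have hf1 : ∀ i, Y i (f i) = 1 := fun i => by simp [hfY i]
    have hfinj : Function.Injective f := by
      intro i1 i2 h12
      by_contra hne
      have hsub : ({i1, i2} : Finset (Fin c)) ⊆ Finset.univ := Finset.subset_univ _
      have h2 : ∑ i ∈ ({i1, i2} : Finset (Fin c)), Y i (f i1) = 2 := by
        rw [Finset.sum_pair hne, hf1 i1, h12, hf1 i2]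
      have := Finset.sum_le_sum_of_subset hsub (f := fun i => Y i (f i1))
      rw [h2] at this
      have := le_trans this (hYcol (f i1))
      omega
    obtain ⟨σ, hσ⟩ := exists_perm_extend h f hfinj
    set Y' : Fin cs → Fin cs → ℕ := fun i j => if j = σ i then 1 else 0 with hY'def
    have hY'01 : ∀ i j : Fin cs, Y' i j = 0 ∨ Y' i j = 1 := by
      intro i j; by_cases hj : j = σ i <;> simp [hY'def, hj]
    have hY'row : ∀ i : Fin cs, ∑ j, Y' i j = 1 := by
      intro i; simp [hY'def]
    have hY'col : ∀ j : Fin cs, ∑ i, Y' i j = 1 := by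
      intro j
      have := Equiv.sum_comp σ (fun j' => if j = j' then (1:ℕ) else 0)
      simpa [hY'def, eq_comm] using this
    have hle := hopt Y' hY'01 hY'row hY'col
    -- restrict both sides
    have hL : ∑ i : Fin cs, ∑ j, L' i j * (X' i j : ℝ)
        = ∑ i : Fin c, ∑ j, L i j * (X' (Fin.castLE h i) j : ℝ) := by
      rw [sum_restrict h _ (fun i hi => by simp [hzero i _ hi] : ∀ i : Fin cs, c ≤ (i : ℕ) →
        (∑ j, L' i j * (X' i j : ℝ)) = 0)]
      exact Finset.sum_congr rfl fun i _ => Finset.sum_congr rfl fun j _ => by rw [hpad]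
    have hR : ∑ i : Fin cs, ∑ j, L' i j * (Y' i j : ℝ)
        = ∑ i : Fin c, ∑ j, L i j * (Y i j : ℝ) := by
      rw [sum_restrict h _ (fun i hi => by simp [hzero i _ hi] : ∀ i : Fin cs, c ≤ (i : ℕ) →
        (∑ j, L' i j * (Y' i j : ℝ)) = 0)]
      refine Finset.sum_congr rfl fun i _ => Finset.sum_congr rfl fun j _ => ?_
      rw [hpad]
      congr 1
      have : Y' (Fin.castLE h i) j = Y i j := by
        rw [hY'def]; simp only [hσ i]; rw [hfY i j]
      rw [this]
    rw [hL, hR] at hle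
    exact hle
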